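/- Suppose s is a complex number such that the series Σ_𝔵 (w_t(𝔵)/l(𝔵)) e^{−s·w_t(𝔵)}, taken over all nonempty finite words 𝔵 over the alphabet {1,...,N}, converges absolutely. Then Σ_𝔵 (w_t(𝔵)/l(𝔵)) e^{−s·w_t(𝔵)} = Σ_𝔭 Σ_{k=1}^∞ w_t(𝔭) e^{−s·k·w_t(𝔭)}, where the outer sum on the right runs over all periodic orbits 𝔭 of the shift σ. -/

import Mathlib

namespace SuspendedFlow

/-- The space of sequences over the alphabet `{1,...,N}`. -/
abbrev Sequences (N : ℕ) := ℕ → Fin N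

/-- The left shift on sequences. -/
def shift {N : ℕ} (a : Sequences N) : Sequences N := fun n => a (n + 1)

/-- Nonempty finite words over the alphabet `{1,...,N}`: a word of length `l + 1`. -/
abbrev Word (N : ℕ) := Σ l : ℕ, Fin (l + 1) → Fin N

/-- The length of a word. -/
def wordLen {N : ℕ} (x : Word N) : ℕ := x.1 + 1

/-- The periodic sequence obtained by repeating a finite word. -/
def periodize {N : ℕ} (x : Word N) : Sequences N :=
  fun n => x.2 ⟨n % (x.1 + 1), Nat.mod_lt n (Nat.succ_pos x.1)⟩

/-- Total weight of a finite word: `w(a) + w(σa) + ⋯ + w(σ^{l-1}a)`, where `a` is the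
periodic sequence obtained by repeating the word. -/
noncomputable def totalWeight {N : ℕ} (w : Sequences N → ℝ) (x : Word N) : ℝ :=
  ∑ i : Fin (x.1 + 1), w (shift^[(i : ℕ)] (periodize x))

/-- A finite set of sequences is a periodic orbit of the shift if it is the orbit of a
periodic sequence. -/
def IsPeriodicOrbit {N : ℕ} (p : Finset (Sequences N)) : Prop :=
  ∃ a : Sequences N, (∃ l : ℕ, 1 ≤ l ∧ shift^[l] a = a) ∧
    (p : Set (Sequences N)) = {b | ∃ k : ℕ, b = shift^[k] a}

/-- Total weight of a periodic orbit. -/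
noncomputable def orbitWeight {N : ℕ} (w : Sequences N → ℝ) (p : Finset (Sequences N)) : ℝ :=
  ∑ b ∈ p, w b

open Function

variable {N : ℕ}

lemma shift_iterate (a : Sequences N) (j : ℕ) : shift^[j] a = fun n => a (n + j) := by
  induction j with
  | zero => simp
  | succ j ih =>
    rw [Function.iterate_succ_apply', ih]
    funext n
    show a (n + 1 + j) = a (n + (j + 1))
    congr 1; omega

lemma periodize_isPeriodicPt (x : Word N) :
    Function.IsPeriodicPt shift (x.1 + 1) (periodize x) := by
  show shift^[x.1 + 1] (periodize x) = periodize x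
  rw [shift_iterate]
  funext n
  show periodize x (n + (x.1 + 1)) = periodize x n
  simp only [periodize]
  exact congrArg x.2 (Fin.ext (Nat.add_mod_right n (x.1 + 1)))

lemma periodize_mem_periodicPts (x : Word N) : periodize x ∈ periodicPts shift :=
  ⟨x.1 + 1, Nat.succ_pos _, periodize_isPeriodicPt x⟩

lemma apply_add_mul (b : Sequences N) {t : ℕ} (h : shift^[t] b = b) (i q : ℕ) :
    b (i + t * q) = b i := by
  induction q with
  | zero => simp
  | succ q ih =>
    have h1 : b (i + t * q + t) = b (i + t * q) := by
      conv_rhs => rw [← h, shift_iterate]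
    calc b (i + t * (q + 1)) = b (i + t * q + t) := by congr 1; ring
      _ = b (i + t * q) := h1
      _ = b i := ih

lemma apply_mod (b : Sequences N) {t : ℕ} (h : shift^[t] b = b) (n : ℕ) :
    b (n % t) = b n := by
  conv_rhs => rw [← Nat.mod_add_div n t]
  exact (apply_add_mul b h (n % t) (n / t)).symm

noncomputable def orbitOf (a : Sequences N) : Finset (Sequences N) :=
  haveI := Classical.decEq (Sequences N)
  (Finset.range (Function.minimalPeriod shift a)).image (fun i => shift^[i] a)

lemma mem_orbitOf {a : Sequences N} (ha : a ∈ periodicPts shift) (b : Sequences N) :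
    b ∈ orbitOf a ↔ ∃ k : ℕ, b = shift^[k] a := by
  classical
  simp only [orbitOf, Finset.mem_image, Finset.mem_range]
  constructor
  · rintro ⟨i, _, rfl⟩; exact ⟨i, rfl⟩
  · rintro ⟨k, rfl⟩
    exact ⟨k % minimalPeriod shift a,
      Nat.mod_lt _ (minimalPeriod_pos_of_mem_periodicPts ha),
      iterate_mod_minimalPeriod_eq⟩

lemma injOn_iterate (a : Sequences N) :
    Set.InjOn (fun i => shift^[i] a) (Finset.range (minimalPeriod shift a)) := by
  intro i hi j hj hij
  exact iterate_injOn_Iio_minimalPeriod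
    (Set.mem_Iio.mpr (Finset.mem_range.mp hi)) (Set.mem_Iio.mpr (Finset.mem_range.mp hj)) hij

lemma card_orbitOf (a : Sequences N) :
    (orbitOf a).card = minimalPeriod shift a := by
  classical
  rw [orbitOf, Finset.card_image_of_injOn (injOn_iterate a), Finset.card_range]

lemma orbitWeight_orbitOf (w : Sequences N → ℝ) (a : Sequences N) :
    orbitWeight w (orbitOf a) = ∑ i ∈ Finset.range (minimalPeriod shift a), w (shift^[i] a) := by
  classical
  rw [orbitWeight, orbitOf, Finset.sum_image (fun x hx y hy h => injOn_iterate a hx hy h)]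

lemma isPeriodicOrbit_orbitOf {a : Sequences N} (ha : a ∈ periodicPts shift) :
    IsPeriodicOrbit (orbitOf a) := by
  obtain ⟨l, hl, hla⟩ := ha
  exact ⟨a, ⟨l, hl, hla⟩, Set.ext fun b => by
    simpa using mem_orbitOf ⟨l, hl, hla⟩ b⟩

lemma orbitOf_iterate {a : Sequences N} (ha : a ∈ periodicPts shift) (j : ℕ) :
    orbitOf (shift^[j] a) = orbitOf a := by
  obtain ⟨n, hn, hpt⟩ := ha
  have ha : a ∈ periodicPts shift := ⟨n, hn, hpt⟩
  have ha' : shift^[j] a ∈ periodicPts shift := ⟨n, hn, hpt.apply_iterate j⟩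
  have hm : 1 ≤ minimalPeriod shift a := minimalPeriod_pos_of_mem_periodicPts ha
  apply Finset.coe_injective
  ext b
  simp only [Finset.mem_coe, mem_orbitOf ha', mem_orbitOf ha]
  constructor
  · rintro ⟨k, rfl⟩
    exact ⟨k + j, by rw [Function.iterate_add_apply]⟩
  · rintro ⟨k, rfl⟩
    refine ⟨k + j * (minimalPeriod shift a - 1), ?_⟩
    rw [← Function.iterate_add_apply]
    have hq : k + j * (minimalPeriod shift a - 1) + j = k + minimalPeriod shift a * j := by
      have h1 : j * (minimalPeriod shift a - 1) + j = minimalPeriod shift a * j := by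
        rw [← Nat.mul_succ, Nat.succ_eq_add_one, Nat.sub_add_cancel hm, Nat.mul_comm]
      omega
    rw [hq, Function.iterate_add_apply]
    congr 1
    exact Eq.symm ((isPeriodicPt_minimalPeriod shift a).mul_const j)

lemma orbit_spec {p : Finset (Sequences N)} (hp : IsPeriodicOrbit p) {b : Sequences N}
    (hb : b ∈ p) : b ∈ periodicPts shift ∧ orbitOf b = p := by
  obtain ⟨a, ⟨l, hl, hla⟩, hset⟩ := hp
  have ha : a ∈ periodicPts shift := ⟨l, hl, hla⟩
  have hb' : b ∈ {c | ∃ k : ℕ, c = shift^[k] a} := hset ▸ Finset.mem_coe.mpr hb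
  obtain ⟨k, rfl⟩ := hb'
  have hla' : Function.IsPeriodicPt shift l a := hla
  refine ⟨⟨l, hl, hla'.apply_iterate k⟩, ?_⟩
  rw [orbitOf_iterate ha k]
  apply Finset.coe_injective
  rw [hset]
  ext c
  simpa using mem_orbitOf ha c


noncomputable def wordOf (b : Sequences N) (k : ℕ) : Word N :=
  ⟨(k + 1) * Function.minimalPeriod shift b - 1, fun i => b i⟩

lemma wordOf_len {b : Sequences N} (hb : b ∈ periodicPts shift) (k : ℕ) :
    (wordOf b k).1 + 1 = (k + 1) * minimalPeriod shift b := by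
  have hm : 0 < minimalPeriod shift b := minimalPeriod_pos_of_mem_periodicPts hb
  have : 0 < (k + 1) * minimalPeriod shift b := Nat.mul_pos (Nat.succ_pos k) hm
  simp only [wordOf]
  omega

lemma periodize_wordOf {b : Sequences N} (hb : b ∈ periodicPts shift) (k : ℕ) :
    periodize (wordOf b k) = b := by
  funext n
  have hlen := wordOf_len hb k
  have hper : shift^[(k + 1) * minimalPeriod shift b] b = b :=
    (isPeriodicPt_minimalPeriod shift b).const_mul (k + 1)
  show (wordOf b k).2 ⟨n % ((wordOf b k).1 + 1), _⟩ = b n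
  show b (n % ((wordOf b k).1 + 1)) = b n
  rw [hlen]
  exact apply_mod b hper n

lemma mem_orbitOf_self {a : Sequences N} (ha : a ∈ periodicPts shift) : a ∈ orbitOf a :=
  (mem_orbitOf ha a).mpr ⟨0, rfl⟩

/-- Extensionality for words. -/
lemma word_ext (x y : Word N) (h1 : x.1 = y.1)
    (h2 : ∀ n (hx : n < x.1 + 1) (hy : n < y.1 + 1), x.2 ⟨n, hx⟩ = y.2 ⟨n, hy⟩) : x = y := by
  obtain ⟨lx, fx⟩ := x
  obtain ⟨ly, fy⟩ := y
  dsimp at h1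
  subst h1
  have : fx = fy := by
    funext i
    have := h2 i i.2 i.2
    simpa using this
  rw [this]

abbrev Orbits (N : ℕ) := {p : Finset (Sequences N) // IsPeriodicOrbit p}

lemma sigma_triple_ext {t u : Σ p : Orbits N, ℕ × {b // b ∈ p.1}}
    (h1 : t.1.1 = u.1.1) (h2 : t.2.1 = u.2.1) (h3 : t.2.2.1 = u.2.2.1) : t = u := by
  obtain ⟨⟨p, hp⟩, k, b, hb⟩ := t
  obtain ⟨⟨q, hq⟩, l, c, hc⟩ := u
  dsimp at h1 h2 h3
  subst h1; subst h2; subst h3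
  rfl

noncomputable def tripleEquiv (N : ℕ) :
    Word N ≃ Σ p : Orbits N, ℕ × {b // b ∈ p.1} where
  toFun x :=
    ⟨⟨orbitOf (periodize x), isPeriodicOrbit_orbitOf (periodize_mem_periodicPts x)⟩,
     ((x.1 + 1) / minimalPeriod shift (periodize x) - 1,
      ⟨periodize x, mem_orbitOf_self (periodize_mem_periodicPts x)⟩)⟩
  invFun t := wordOf t.2.2.1 t.2.1
  left_inv x := by
    have hmem := periodize_mem_periodicPts x
    have hm : 0 < minimalPeriod shift (periodize x) :=
      minimalPeriod_pos_of_mem_periodicPts hmem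
    have hdvd : minimalPeriod shift (periodize x) ∣ x.1 + 1 :=
      (periodize_isPeriodicPt x).minimalPeriod_dvd
    have hk : (x.1 + 1) / minimalPeriod shift (periodize x) - 1 + 1
        = (x.1 + 1) / minimalPeriod shift (periodize x) := by
      have : 1 ≤ (x.1 + 1) / minimalPeriod shift (periodize x) :=
        (Nat.one_le_div_iff hm).mpr (Nat.le_of_dvd (Nat.succ_pos _) hdvd)
      omega
    show wordOf (periodize x) ((x.1 + 1) / minimalPeriod shift (periodize x) - 1) = x
    have hlen : (wordOf (periodize x) ((x.1 + 1) / minimalPeriod shift (periodize x) - 1)).1 + 1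
        = x.1 + 1 := by
      rw [wordOf_len hmem, hk, Nat.div_mul_cancel hdvd]
    apply word_ext _ _ (by omega)
    intro n hx hy
    show periodize x n = x.2 ⟨n, hy⟩
    show x.2 ⟨n % (x.1 + 1), _⟩ = x.2 ⟨n, hy⟩
    exact congrArg x.2 (Fin.ext (Nat.mod_eq_of_lt hy))
  right_inv t := by
    obtain ⟨⟨p, hp⟩, k, b, hb⟩ := t
    obtain ⟨hbper, horb⟩ := orbit_spec hp hb
    have hm : 0 < minimalPeriod shift b := minimalPeriod_pos_of_mem_periodicPts hbper
    have hper : periodize (wordOf b k) = b := periodize_wordOf hbper k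
    apply sigma_triple_ext
    · show orbitOf (periodize (wordOf b k)) = p
      rw [hper, horb]
    · show ((wordOf b k).1 + 1) / minimalPeriod shift (periodize (wordOf b k)) - 1 = k
      rw [hper, wordOf_len hbper, Nat.mul_div_cancel _ hm]
      omega
    · exact hper


lemma apply_mul_add (g : ℕ → ℝ) {m : ℕ} (hper : ∀ i, g (i + m) = g i) :
    ∀ q i, g (q * m + i) = g i := by
  intro q
  induction q with
  | zero => simp
  | succ q ih2 =>
    intro i
    have h : (q + 1) * m + i = q * m + i + m := by ring
    rw [h, hper, ih2]

lemma sum_range_mul_period (g : ℕ → ℝ) {m : ℕ} (hper : ∀ i, g (i + m) = g i) (q : ℕ) :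
    ∑ i ∈ Finset.range (q * m), g i = q * ∑ i ∈ Finset.range m, g i := by
  induction q with
  | zero => simp
  | succ q ih =>
    have hsplit : (q + 1) * m = q * m + m := by ring
    rw [hsplit, Finset.sum_range_add, ih]
    rw [Finset.sum_congr rfl fun i _ => apply_mul_add g hper q i]
    push_cast
    ring

lemma totalWeight_wordOf (w : Sequences N → ℝ) {p : Finset (Sequences N)}
    (hp : IsPeriodicOrbit p) {b : Sequences N} (hb : b ∈ p) (k : ℕ) :
    totalWeight w (wordOf b k) = (k + 1 : ℝ) * orbitWeight w p := by
  obtain ⟨hbper, horb⟩ := orbit_spec hp hb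
  set m := minimalPeriod shift b with hmdef
  have hlen := wordOf_len hbper k
  have hper : ∀ i, w (shift^[i + m] b) = w (shift^[i] b) := by
    intro i
    rw [Function.iterate_add_apply]
    congr 2
    exact isPeriodicPt_minimalPeriod shift b
  calc totalWeight w (wordOf b k)
      = ∑ i ∈ Finset.range ((wordOf b k).1 + 1), w (shift^[i] (periodize (wordOf b k))) := by
        rw [totalWeight]
        exact Fin.sum_univ_eq_sum_range (fun n => w (shift^[n] (periodize (wordOf b k)))) _
    _ = ∑ i ∈ Finset.range ((k + 1) * m), w (shift^[i] b) := by
        rw [hlen, periodize_wordOf hbper]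
    _ = (k + 1 : ℝ) * ∑ i ∈ Finset.range m, w (shift^[i] b) := by
        rw [sum_range_mul_period (fun i => w (shift^[i] b)) hper (k + 1)]
        push_cast; ring
    _ = (k + 1 : ℝ) * orbitWeight w p := by
        rw [← horb, orbitWeight_orbitOf]

lemma card_of_mem_orbit {p : Finset (Sequences N)} (hp : IsPeriodicOrbit p)
    {b : Sequences N} (hb : b ∈ p) : p.card = minimalPeriod shift b := by
  obtain ⟨hbper, horb⟩ := orbit_spec hp hb
  rw [← horb, card_orbitOf]

lemma wordLen_wordOf {p : Finset (Sequences N)} (hp : IsPeriodicOrbit p)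
    {b : Sequences N} (hb : b ∈ p) (k : ℕ) :
    wordLen (wordOf b k) = (k + 1) * p.card := by
  obtain ⟨hbper, _⟩ := orbit_spec hp hb
  rw [wordLen, wordOf_len hbper, card_of_mem_orbit hp hb]

lemma orbit_card_pos {p : Finset (Sequences N)} (hp : IsPeriodicOrbit p) : 0 < p.card := by
  obtain ⟨a, ⟨l, hl, hla⟩, hset⟩ := hp
  have : a ∈ (p : Set (Sequences N)) := by rw [hset]; exact ⟨0, rfl⟩
  exact Finset.card_pos.mpr ⟨a, this⟩


set_option maxHeartbeats 1000000 in
/-- Euler sum: the sum over all nonempty finite words of `(w_t(x)/l(x)) e^{-s w_t(x)}`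
equals the sum over all periodic orbits `p` of `∑_{k ≥ 1} w_t(p) e^{-s k w_t(p)}`. -/
theorem euler_sum (N : ℕ) (hN : 1 ≤ N) (w : Sequences N → ℝ) (hw : ∀ a, 0 < w a) (s : ℂ)
    (habs : Summable fun x : Word N =>
      ‖((totalWeight w x : ℂ) / (wordLen x : ℂ)) * Complex.exp (-s * (totalWeight w x : ℂ))‖) :
    ∑' x : Word N,
        ((totalWeight w x : ℂ) / (wordLen x : ℂ)) * Complex.exp (-s * (totalWeight w x : ℂ))
      = ∑' (p : {p : Finset (Sequences N) // IsPeriodicOrbit p}) (k : ℕ),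
          (orbitWeight w p.1 : ℂ) *
            Complex.exp (-s * ((k : ℂ) + 1) * (orbitWeight w p.1 : ℂ)) := by
  set f : Word N → ℂ := fun x =>
    ((totalWeight w x : ℂ) / (wordLen x : ℂ)) * Complex.exp (-s * (totalWeight w x : ℂ))
    with hfdef
  have hf : Summable f := Summable.of_norm habs
  have hg : Summable (fun t => f ((tripleEquiv N).symm t)) :=
    ((tripleEquiv N).symm.summable_iff).mpr hf
  calc ∑' x, f x
      = ∑' t, f ((tripleEquiv N).symm t) := ((tripleEquiv N).symm.tsum_eq f).symm
    _ = ∑' (p : Orbits N), ∑' (c : ℕ × {b // b ∈ p.1}), f ((tripleEquiv N).symm ⟨p, c⟩) :=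
        Summable.tsum_sigma hg
    _ = ∑' (p : Orbits N) (k : ℕ),
          (orbitWeight w p.1 : ℂ) *
            Complex.exp (-s * ((k : ℂ) + 1) * (orbitWeight w p.1 : ℂ)) := by
        apply tsum_congr
        intro p
        have hgp : Summable (fun c : ℕ × {b // b ∈ p.1} => f ((tripleEquiv N).symm ⟨p, c⟩)) :=
          hg.comp_injective sigma_mk_injective
        rw [Summable.tsum_prod hgp]
        apply tsum_congr
        intro k
        rw [tsum_fintype]
        have hcard : 0 < p.1.card := orbit_card_pos p.2
        set K : ℂ := (k : ℂ) + 1 with hKdef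
        set W : ℂ := (orbitWeight w p.1 : ℂ) with hWdef
        set c : ℂ := (p.1.card : ℂ) with hcdef
        have hK : K ≠ 0 := by
          rw [hKdef]; exact Nat.cast_add_one_ne_zero k
        have hc : c ≠ 0 := by
          rw [hcdef]; exact_mod_cast hcard.ne'
        have hval : ∀ b : {b // b ∈ p.1},
            f ((tripleEquiv N).symm ⟨p, (k, b)⟩)
              = (K * W / (K * c)) * Complex.exp (-s * (K * W)) := by
          intro b
          show f (wordOf b.1 k) = _
          rw [hfdef]
          simp only
          rw [totalWeight_wordOf w p.2 b.2 k, wordLen_wordOf p.2 b.2 k]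
          rw [hKdef, hWdef, hcdef]
          push_cast
          ring_nf
        calc ∑ b : {b // b ∈ p.1}, f ((tripleEquiv N).symm ⟨p, (k, b)⟩)
            = ∑ _b : {b // b ∈ p.1}, (K * W / (K * c)) * Complex.exp (-s * (K * W)) :=
              Finset.sum_congr rfl (fun b _ => hval b)
          _ = (p.1.card : ℂ) * ((K * W / (K * c)) * Complex.exp (-s * (K * W))) := by
              rw [Finset.sum_const, Finset.card_univ, Fintype.card_coe, nsmul_eq_mul]
          _ = W * Complex.exp (-s * K * W) := by
              rw [← hcdef, ← mul_assoc]
              have h1 : c * (K * W / (K * c)) = W := by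
                field_simp
              rw [h1, mul_assoc (-s) K W]


end SuspendedFlow
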